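/- arXiv:1107.5862 — 7 statements merged into one kernel-verified Lean document; each statement's English description precedes it below -/
import Mathlib

section
/- Let N ≥ 1 be an integer. Each transposed matrix M_{N,j}ᵗ (1 ≤ j ≤ N) is an involution in GL_N(ℝ), and the group homomorphism from the free product UC(N) = ℤ/2ℤ ∗ ℤ/2ℤ ∗ ⋯ ∗ ℤ/2ℤ (N factors) to GL_N(ℝ) sending the generator of the j-th free factor to M_{N,j}ᵗ is injective. In particular, the subgroup of GL_N(ℝ) generated by M_{N,1}ᵗ, …, M_{N,N}ᵗ is isomorphic to the universal Coxeter group UC(N): there are no relations among these N involutions other than each squaring to the identity. -/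
open Matrix

/-- The matrix `M_{N,j}`: identity except in the `j`-th column, whose `j`-th entry
is `-1` and whose other entries are all `2`. -/
noncomputable def Mmat (N : ℕ) (j : Fin N) : Matrix (Fin N) (Fin N) ℝ :=
  Matrix.of fun i k => if k = j then (if i = j then -1 else 2) else (if i = k then 1 else 0)

/-- The matrix `B_N`: diagonal entries `-1`, off-diagonal entries `1`. -/
noncomputable def Bmat (N : ℕ) : Matrix (Fin N) (Fin N) ℝ :=
  Matrix.of fun i k => if i = k then -1 else 1

/-- The symmetric bilinear form `b_N(v,w) = vᵗ B_N w` on `ℝ^N`. -/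
noncomputable def bform (N : ℕ) (v w : Fin N → ℝ) : ℝ := v ⬝ᵥ (Bmat N).mulVec w

/-- The subgroup of `GL_N(ℝ)` generated by the transposed matrices `M_{N,j}ᵗ`. -/
noncomputable def Ggrp (N : ℕ) : Subgroup (GL (Fin N) ℝ) :=
  Subgroup.closure {g | ∃ j : Fin N, (g : Matrix (Fin N) (Fin N) ℝ) = (Mmat N j)ᵀ}

/-- The fundamental cone `D_N = {w : b_N(w, α_i) ≥ 0 for all i}`. -/
def Dcone (N : ℕ) : Set (Fin N → ℝ) := {w | ∀ i : Fin N, 0 ≤ bform N w (Pi.single i 1)}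

/-- The Tits cone `T_N = ⋃_{g ∈ G_N} g (D_N)`. -/
def Tcone (N : ℕ) : Set (Fin N → ℝ) :=
  {v | ∃ g ∈ Ggrp N, ∃ w ∈ Dcone N, v = (g : Matrix (Fin N) (Fin N) ℝ).mulVec w}

/-- The vector `c_j = u_N - (N-2) α_j`: coordinates `1` except the `j`-th which is `-(N-3)`. -/
noncomputable def cvec (N : ℕ) (j : Fin N) : Fin N → ℝ :=
  fun i => if i = j then -((N : ℝ) - 3) else 1

/-- The integral matrix `M_{N,j}`. -/
def MmatZ (N : ℕ) (j : Fin N) : Matrix (Fin N) (Fin N) ℤ :=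
  Matrix.of fun i k => if k = j then (if i = j then -1 else 2) else (if i = k then 1 else 0)

/-- The integral matrix `B_N`. -/
def BmatZ (N : ℕ) : Matrix (Fin N) (Fin N) ℤ :=
  Matrix.of fun i k => if i = k then -1 else 1

/-- The bilinear form `b_N` on `ℤ^N`. -/
def bformZ (N : ℕ) (v w : Fin N → ℤ) : ℤ := v ⬝ᵥ (BmatZ N).mulVec w

set_option synthInstance.maxHeartbeats 1000000
set_option linter.unnecessarySeqFocus false
set_option linter.unusedTactic false

lemma Mmul (N : ℕ) (j : Fin N) : Mmat N j * Mmat N j = 1 := by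
  ext i k
  rw [Matrix.mul_apply]
  by_cases hi : i = j
  · subst hi
    have key : ∀ m, Mmat N i i m * Mmat N i m k
        = if m = i then -Mmat N i i k else 0 := by
      intro m
      rcases eq_or_ne m i with hm | hm
      · subst hm
        rcases eq_or_ne k m with h | h
        · subst h; simp [Mmat]
        · simp [Mmat, h, Ne.symm h]
      · simp [Mmat, hm, hm.symm]
    simp only [key]
    rw [Finset.sum_ite_eq' Finset.univ i (fun _ => -Mmat N i i k)]
    rcases eq_or_ne k i with hk | hk
    · subst hk; simp [Mmat, Matrix.one_apply]
    · simp [Mmat, hk, Ne.symm hk, Matrix.one_apply]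
  · have key : ∀ m, Mmat N j i m * Mmat N j m k
        = (if m = j then 2 * Mmat N j j k else 0) + (if m = i then Mmat N j i k else 0) := by
      intro m
      rcases eq_or_ne m j with hm | hm
      · subst hm; simp [Mmat, hi, Ne.symm hi]
      · rcases eq_or_ne m i with hmi | hmi
        · subst hmi; simp [Mmat, hm, hi]
        · simp [Mmat, hm, hmi, hmi.symm]
    simp only [key]
    rw [Finset.sum_add_distrib, Finset.sum_ite_eq' Finset.univ j, Finset.sum_ite_eq' Finset.univ i]
    rcases eq_or_ne k j with hk | hk
    · subst hk
      simp [Mmat, hi, Ne.symm hi, Matrix.one_apply]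
      try ring
    · rcases eq_or_ne i k with hik | hik
      · subst hik; simp [Mmat, hk, Ne.symm hk, Matrix.one_apply]
      · simp [Mmat, hk, hik, Ne.symm hik, Matrix.one_apply]
        exact fun h => hk h.symm

lemma Mkey (N : ℕ) (j : Fin N) : (Mmat N j)ᵀ * (Mmat N j)ᵀ = 1 := by
  rw [← Matrix.transpose_mul, Mmul, Matrix.transpose_one]

/-- `M_{N,j}ᵀ` as an element of `GL_N(ℝ)`. -/
noncomputable def sGL (N : ℕ) (j : Fin N) : GL (Fin N) ℝ :=
  ⟨(Mmat N j)ᵀ, (Mmat N j)ᵀ, Mkey N j, Mkey N j⟩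

lemma sGL_val (N : ℕ) (j : Fin N) : ((sGL N j : GL (Fin N) ℝ) : Matrix (Fin N) (Fin N) ℝ) = (Mmat N j)ᵀ := rfl

lemma sGL_mul_self (N : ℕ) (j : Fin N) : sGL N j * sGL N j = 1 :=
  Units.ext (Mkey N j)

lemma sGL_ne_one (N : ℕ) (j : Fin N) : sGL N j ≠ 1 := by
  intro h
  have h2 : ((sGL N j : GL (Fin N) ℝ) : Matrix (Fin N) (Fin N) ℝ) j j
      = (1 : Matrix (Fin N) (Fin N) ℝ) j j := by rw [h]; rfl
  rw [sGL_val] at h2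
  simp [Mmat, Matrix.transpose_apply, Matrix.one_apply] at h2
  norm_num at h2

lemma sMulVec (N : ℕ) (j : Fin N) (v : Fin N → ℝ) :
    (Mmat N j)ᵀ.mulVec v = fun i =>
      if i = j then 2 * (∑ k, v k) - 3 * v j else v i := by
  funext i
  rw [Matrix.mulVec, dotProduct]
  rcases eq_or_ne i j with hi | hi
  · subst hi
    have key : ∀ k, (Mmat N i)ᵀ i k * v k = 2 * v k + (if k = i then (-3) * v k else 0) := by
      intro k
      rcases eq_or_ne k i with hk | hk
      · subst hk; simp [Mmat, Matrix.transpose_apply]; try ring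
      · simp [Mmat, Matrix.transpose_apply, hk]; try ring
    simp only [key]
    rw [Finset.sum_add_distrib, Finset.sum_ite_eq' Finset.univ i, ← Finset.mul_sum]
    simp only [Finset.mem_univ, if_pos]; ring
  · have key : ∀ k, (Mmat N j)ᵀ i k * v k = (if k = i then v k else 0) := by
      intro k
      rcases eq_or_ne k i with hk | hk
      · subst hk; simp [Mmat, Matrix.transpose_apply, hi]
      · simp [Mmat, hi, hk]
    simp only [key]
    rw [Finset.sum_ite_eq' Finset.univ i]
    simp [hi]

lemma zmod2_cases (m : Multiplicative (ZMod 2)) :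
    m = 1 ∨ m = Multiplicative.ofAdd (1 : ZMod 2) := by
  revert m; decide

/-- The homomorphism `ℤ/2ℤ → G` sending the generator to an involution `g`. -/
def invHom {G : Type*} [Monoid G] (g : G) (hg : g * g = 1) :
    Multiplicative (ZMod 2) →* G where
  toFun x := g ^ (Multiplicative.toAdd x).val
  map_one' := by simp
  map_mul' x y := by
    have hper : ∀ m : ℕ, g ^ (m % 2) = g ^ m := by
      intro m
      conv_rhs => rw [← Nat.mod_add_div m 2]
      rw [pow_add, pow_mul, pow_two, hg, one_pow, mul_one]
    show g ^ (Multiplicative.toAdd (x * y)).val = _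
    have : Multiplicative.toAdd (x * y) = Multiplicative.toAdd x + Multiplicative.toAdd y := rfl
    rw [this, ZMod.val_add, hper, pow_add]

lemma invHom_gen {G : Type*} [Monoid G] (g : G) (hg : g * g = 1) :
    invHom g hg (Multiplicative.ofAdd (1 : ZMod 2)) = g := by
  show g ^ (Multiplicative.toAdd (Multiplicative.ofAdd (1 : ZMod 2))).val = g
  have : (Multiplicative.toAdd (Multiplicative.ofAdd (1 : ZMod 2))).val = 1 := rfl
  rw [this, pow_one]

lemma invHom_ne_one {G : Type*} [Monoid G] (g : G) (hg : g * g = 1)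
    (h : Multiplicative (ZMod 2)) (hne : h ≠ 1) : invHom g hg h = g := by
  rcases zmod2_cases h with h1 | h1
  · exact absurd h1 hne
  · rw [h1, invHom_gen]

noncomputable instance glVecAction (N : ℕ) : MulAction (GL (Fin N) ℝ) (Fin N → ℝ) where
  smul g v := (g : Matrix (Fin N) (Fin N) ℝ).mulVec v
  one_smul v := by
    show ((1 : GL (Fin N) ℝ) : Matrix (Fin N) (Fin N) ℝ).mulVec v = v
    simp
  mul_smul g h v := by
    show ((g * h : GL (Fin N) ℝ) : Matrix (Fin N) (Fin N) ℝ).mulVec v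
      = (g : Matrix (Fin N) (Fin N) ℝ).mulVec ((h : Matrix (Fin N) (Fin N) ℝ).mulVec v)
    rw [Units.val_mul, ← Matrix.mulVec_mulVec]

lemma gl_smul_def (N : ℕ) (g : GL (Fin N) ℝ) (v : Fin N → ℝ) :
    g • v = (g : Matrix (Fin N) (Fin N) ℝ).mulVec v := rfl

/-- Ping-pong sets. -/
def Yset (N : ℕ) (i : Fin N) : Set (Fin N → ℝ) :=
  {v | (∀ k, 1 ≤ v k) ∧ ∀ k, k ≠ i → v k < v i}

lemma Yset_nonempty (N : ℕ) (i : Fin N) : (Yset N i).Nonempty := by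
  refine ⟨fun k => if k = i then 2 else 1, ⟨fun k => ?_, fun k hk => ?_⟩⟩
  · rcases eq_or_ne k i with h | h <;> simp [h]
  · simp [hk]

lemma Yset_disj (N : ℕ) : Pairwise (Function.onFun Disjoint (Yset N)) := by
  intro i j hij
  rw [Function.onFun, Set.disjoint_left]
  rintro v ⟨-, hvi⟩ ⟨-, hvj⟩
  exact absurd (hvi j (Ne.symm hij)) (not_lt.mpr (le_of_lt (hvj i hij)))

lemma pingpong_step (N : ℕ) {i j : Fin N} (hij : i ≠ j) {v : Fin N → ℝ} (hv : v ∈ Yset N j) :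
    (Mmat N i)ᵀ.mulVec v ∈ Yset N i := by
  obtain ⟨h1, hmax⟩ := hv
  rw [sMulVec]
  have hvij : v i < v j := hmax i hij
  have hsum : v i + v j ≤ ∑ k, v k := by
    have : ∑ k ∈ ({i, j} : Finset (Fin N)), v k ≤ ∑ k, v k := by
      apply Finset.sum_le_sum_of_subset_of_nonneg (Finset.subset_univ _)
      intro k _ _
      linarith [h1 k]
    rwa [Finset.sum_pair hij] at this
  have hbig : v j < 2 * (∑ k, v k) - 3 * v i := by linarith
  constructor
  · intro k
    rcases eq_or_ne k i with hk | hk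
    · simp only [hk, if_pos]
      linarith [h1 j]
    · simp only [if_neg hk]
      exact h1 k
  · intro k hk
    simp only [if_neg hk, if_pos]
    rcases eq_or_ne k j with hkj | hkj
    · subst hkj; exact hbig
    · exact lt_trans (hmax k hkj) hbig

/-- The homomorphism from the free product. -/
noncomputable def phiHom (N : ℕ) : Monoid.CoprodI (fun _ : Fin N => Multiplicative (ZMod 2)) →* GL (Fin N) ℝ :=
  Monoid.CoprodI.lift (fun j => invHom (sGL N j) (sGL_mul_self N j))

lemma phiHom_of (N : ℕ) (j : Fin N) :
    phiHom N (Monoid.CoprodI.of (i := j) (Multiplicative.ofAdd (1 : ZMod 2))) = sGL N j := by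
  rw [phiHom, Monoid.CoprodI.lift_of, invHom_gen]

lemma phiHom_inj_ge3 (N : ℕ) (hN : 3 ≤ N) : Function.Injective (phiHom N) := by
  haveI : Nontrivial (Fin N) := Fin.nontrivial_iff_two_le.mpr (by omega)
  apply Monoid.CoprodI.lift_injective_of_ping_pong
    (fun j => invHom (sGL N j) (sGL_mul_self N j))
    (Or.inl (by rw [Cardinal.mk_fin]; exact_mod_cast hN))
    (Yset N) (Yset_nonempty N) (Yset_disj N)
  intro i j hij h hne
  rw [invHom_ne_one _ _ _ hne]
  rintro v ⟨w, hw, rfl⟩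
  show (sGL N i) • w ∈ Yset N i
  rw [gl_smul_def, sGL_val]
  exact pingpong_step N hij hw

lemma coprodI_fin1_cases (w : Monoid.CoprodI (fun _ : Fin 1 => Multiplicative (ZMod 2))) :
    w = 1 ∨ w = Monoid.CoprodI.of (M := fun _ : Fin 1 => Multiplicative (ZMod 2)) (i := 0) (Multiplicative.ofAdd (1 : ZMod 2)) := by
  induction w using Monoid.CoprodI.induction_on with
  | one => exact Or.inl rfl
  | of i m =>
    have hi : i = 0 := Subsingleton.elim _ _
    subst hi
    rcases zmod2_cases m with rfl | rfl
    · exact Or.inl (_root_.map_one _)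
    · exact Or.inr rfl
  | mul a b ha hb =>
    have hxx : (Monoid.CoprodI.of (M := fun _ : Fin 1 => Multiplicative (ZMod 2)) (i := 0) (Multiplicative.ofAdd (1 : ZMod 2))) *
        Monoid.CoprodI.of (M := fun _ : Fin 1 => Multiplicative (ZMod 2)) (i := 0) (Multiplicative.ofAdd (1 : ZMod 2)) = 1 := by
      rw [← _root_.map_mul]
      have : (Multiplicative.ofAdd (1 : ZMod 2)) * Multiplicative.ofAdd (1 : ZMod 2) = 1 := by
        decide
      rw [this, _root_.map_one]
    rcases ha with rfl | rfl <;> rcases hb with rfl | rfl <;>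
      simp [hxx]

lemma phiHom_inj_one : Function.Injective (phiHom 1) := by
  rw [injective_iff_map_eq_one]
  intro w hw
  rcases coprodI_fin1_cases w with rfl | rfl
  · rfl
  · rw [phiHom_of] at hw
    exact absurd hw (sGL_ne_one 1 0)

namespace DihedralCase

noncomputable abbrev xg : Monoid.CoprodI (fun _ : Fin 2 => Multiplicative (ZMod 2)) :=
  Monoid.CoprodI.of (M := fun _ : Fin 2 => Multiplicative (ZMod 2)) (i := 0)
    (Multiplicative.ofAdd (1 : ZMod 2))

noncomputable abbrev yg : Monoid.CoprodI (fun _ : Fin 2 => Multiplicative (ZMod 2)) :=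
  Monoid.CoprodI.of (M := fun _ : Fin 2 => Multiplicative (ZMod 2)) (i := 1)
    (Multiplicative.ofAdd (1 : ZMod 2))

noncomputable abbrev rg := xg * yg

lemma hg2 : (Multiplicative.ofAdd (1 : ZMod 2)) * Multiplicative.ofAdd (1 : ZMod 2) = 1 := by
  decide

lemma hxx : xg * xg = 1 := by rw [← _root_.map_mul, hg2, _root_.map_one]

lemma hyy : yg * yg = 1 := by rw [← _root_.map_mul, hg2, _root_.map_one]

lemma hxinv : xg⁻¹ = xg := inv_eq_of_mul_eq_one_right hxx

lemma hyinv : yg⁻¹ = yg := inv_eq_of_mul_eq_one_right hyy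

lemma hconj1 : xg * rg * xg⁻¹ = rg⁻¹ := by
  rw [hxinv]
  show xg * (xg * yg) * xg = (xg * yg)⁻¹
  rw [_root_.mul_inv_rev, hxinv, hyinv, ← mul_assoc, hxx, one_mul]

lemma hconj (k : ℤ) : xg * rg ^ k = rg ^ (-k) * xg := by
  have h2 : MulAut.conj xg (rg ^ k) = (MulAut.conj xg rg) ^ k := map_zpow _ rg k
  rw [MulAut.conj_apply, MulAut.conj_apply, hconj1, _root_.inv_zpow'] at h2
  calc xg * rg ^ k = (xg * rg ^ k * xg⁻¹) * xg := by group
    _ = rg ^ (-k) * xg := by rw [h2]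

lemma structure_lemma (w : Monoid.CoprodI (fun _ : Fin 2 => Multiplicative (ZMod 2))) :
    ∃ k : ℤ, w = rg ^ k ∨ w = rg ^ k * xg := by
  induction w using Monoid.CoprodI.induction_on with
  | one => exact ⟨0, Or.inl (by simp)⟩
  | of i m =>
    rcases zmod2_cases m with rfl | rfl
    · exact ⟨0, Or.inl (by simp [_root_.map_one])⟩
    · fin_cases i
      · exact ⟨0, Or.inr (by simp)⟩
      · refine ⟨-1, Or.inr ?_⟩
        show yg = rg ^ (-1 : ℤ) * xg
        rw [_root_.zpow_neg_one]
        show yg = (xg * yg)⁻¹ * xg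
        rw [_root_.mul_inv_rev, hxinv, hyinv, mul_assoc, hxx, mul_one]
  | mul a b ha hb =>
    obtain ⟨p, hp | hp⟩ := ha <;> obtain ⟨q, hq | hq⟩ := hb <;> subst hp <;> subst hq
    · exact ⟨p + q, Or.inl (by rw [_root_.zpow_add])⟩
    · exact ⟨p + q, Or.inr (by rw [_root_.zpow_add, mul_assoc])⟩
    · refine ⟨p - q, Or.inr ?_⟩
      rw [mul_assoc, hconj q, ← mul_assoc, ← _root_.zpow_add, sub_eq_add_neg]
    · refine ⟨p - q, Or.inl ?_⟩
      calc rg ^ p * xg * (rg ^ q * xg) = rg ^ p * (xg * rg ^ q) * xg := by group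
        _ = rg ^ p * (rg ^ (-q) * xg) * xg := by rw [hconj q]
        _ = rg ^ (p - q) * (xg * xg) := by rw [← mul_assoc, ← _root_.zpow_add, sub_eq_add_neg, mul_assoc]
        _ = rg ^ (p - q) := by rw [hxx, mul_one]

end DihedralCase

namespace DihedralCase

noncomputable abbrev Tg : GL (Fin 2) ℝ := sGL 2 0 * sGL 2 1

lemma sGL_inv (N : ℕ) (j : Fin N) : (sGL N j)⁻¹ = sGL N j :=
  inv_eq_of_mul_eq_one_right (sGL_mul_self N j)

lemma Tval : ((Tg : GL (Fin 2) ℝ) : Matrix (Fin 2) (Fin 2) ℝ) = !![3, -2; 2, -1] := by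
  rw [Units.val_mul, sGL_val, sGL_val]
  ext i k
  fin_cases i <;> fin_cases k <;>
    simp [Mmat, Matrix.mul_apply, Fin.sum_univ_two] <;> norm_num

lemma Tinvval : ((Tg⁻¹ : GL (Fin 2) ℝ) : Matrix (Fin 2) (Fin 2) ℝ) = !![-1, 2; -2, 3] := by
  rw [_root_.mul_inv_rev, sGL_inv, sGL_inv, Units.val_mul, sGL_val, sGL_val]
  ext i k
  fin_cases i <;> fin_cases k <;>
    simp [Mmat, Matrix.mul_apply, Fin.sum_univ_two] <;> norm_num

lemma Tpow (k : ℤ) : ((Tg ^ k : GL (Fin 2) ℝ) : Matrix (Fin 2) (Fin 2) ℝ)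
    = !![1 + 2*(k:ℝ), -2*(k:ℝ); 2*(k:ℝ), 1 - 2*(k:ℝ)] := by
  induction k using Int.induction_on with
  | zero => simp [Matrix.one_fin_two]
  | succ n ih =>
    rw [_root_.zpow_add_one, Units.val_mul, ih, Tval]
    ext i k
    fin_cases i <;> fin_cases k <;>
      simp [Matrix.mul_apply, Fin.sum_univ_two] <;> push_cast <;> ring
  | pred n ih =>
    rw [_root_.zpow_sub_one, Units.val_mul, ih, Tinvval]
    ext i k
    fin_cases i <;> fin_cases k <;>
      simp [Matrix.mul_apply, Fin.sum_univ_two] <;> push_cast <;> ring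

lemma detsGL (j : Fin 2) : ((sGL 2 j : GL (Fin 2) ℝ) : Matrix (Fin 2) (Fin 2) ℝ).det = -1 := by
  rw [sGL_val, Matrix.det_transpose]
  fin_cases j <;> norm_num [Mmat, Matrix.det_fin_two, Matrix.of_apply]

lemma phiHom_inj_two : Function.Injective (phiHom 2) := by
  rw [injective_iff_map_eq_one]
  intro w hw
  obtain ⟨k, hk | hk⟩ := structure_lemma w <;> subst hk
  · have hr : phiHom 2 rg = Tg := by
      rw [_root_.map_mul, phiHom_of, phiHom_of]
    rw [map_zpow, hr] at hw
    have hval : ((Tg ^ k : GL (Fin 2) ℝ) : Matrix (Fin 2) (Fin 2) ℝ)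
        = ((1 : GL (Fin 2) ℝ) : Matrix (Fin 2) (Fin 2) ℝ) := by rw [hw]
    rw [Tpow, Units.val_one] at hval
    have h01 : (!![1 + 2*(k:ℝ), -2*k; 2*k, 1 - 2*k]) 0 1 = (1 : Matrix (Fin 2) (Fin 2) ℝ) 0 1 := by
      rw [hval]
    simp [Matrix.one_apply] at h01
    have hk0 : k = 0 := by exact_mod_cast h01
    rw [hk0, zpow_zero]
  · exfalso
    have hr : phiHom 2 (rg ^ k * xg) = Tg ^ k * sGL 2 0 := by
      rw [_root_.map_mul, map_zpow, _root_.map_mul, phiHom_of, phiHom_of]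
    rw [hr] at hw
    have hval : ((Tg ^ k : GL (Fin 2) ℝ) : Matrix (Fin 2) (Fin 2) ℝ)
        * ((sGL 2 0 : GL (Fin 2) ℝ) : Matrix (Fin 2) (Fin 2) ℝ)
        = ((1 : GL (Fin 2) ℝ) : Matrix (Fin 2) (Fin 2) ℝ) := by
      rw [← Units.val_mul, hw]
    have hdet := congrArg Matrix.det hval
    rw [Matrix.det_mul, detsGL, Units.val_one, Matrix.det_one, Tpow,
      Matrix.det_fin_two] at hdet
    norm_num at hdet
    nlinarith [hdet]

end DihedralCase

/-- Each `M_{N,j}ᵗ` is an involution in `GL_N(ℝ)`, and the homomorphism from the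
universal Coxeter group `UC(N)` (the free product of `N` copies of `ℤ/2ℤ`) sending the
generator of the `j`-th free factor to `M_{N,j}ᵗ` is injective. -/
theorem stmt0 (N : ℕ) (hN : 1 ≤ N) :
    (∀ j : Fin N, (Mmat N j)ᵀ * (Mmat N j)ᵀ = 1) ∧
    ∃ φ : Monoid.CoprodI (fun _ : Fin N => Multiplicative (ZMod 2)) →* GL (Fin N) ℝ,
      (∀ j : Fin N,
        ((φ (Monoid.CoprodI.of (i := j) (Multiplicative.ofAdd (1 : ZMod 2)))) :
          Matrix (Fin N) (Fin N) ℝ) = (Mmat N j)ᵀ) ∧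
      Function.Injective φ := by
  refine ⟨Mkey N, phiHom N, fun j => ?_, ?_⟩
  · rw [phiHom_of]
    exact sGL_val N j
  · rcases Nat.lt_or_ge N 3 with h3 | h3
    · interval_cases N
      · exact phiHom_inj_one
      · exact DihedralCase.phiHom_inj_two
    · exact phiHom_inj_ge3 N h3
end

section
/- For all integers N ≥ 1 and 1 ≤ j ≤ N, one has M_{N,j}² = I_N and M_{N,j} B_N M_{N,j}ᵗ = B_N; equivalently, each transposed matrix M_{N,j}ᵗ is an involutive linear map of ℝ^N preserving the bilinear form b_N (i.e. b_N(M_{N,j}ᵗ v, M_{N,j}ᵗ w) = b_N(v,w) for all v, w ∈ ℝ^N). -/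
open Matrix

section aux
variable {N : ℕ}

lemma vmv_mul_vmv (u v w x : Fin N → ℝ) :
    vecMulVec u v * vecMulVec w x = (v ⬝ᵥ w) • vecMulVec u x := by
  ext i k
  simp only [Matrix.mul_apply, vecMulVec_apply, Matrix.smul_apply, dotProduct,
    smul_eq_mul, Finset.sum_mul]
  exact Finset.sum_congr rfl fun l _ => by ring

lemma vmv_mul (u v : Fin N → ℝ) (B : Matrix (Fin N) (Fin N) ℝ) :
    vecMulVec u v * B = vecMulVec u (v ᵥ* B) := by
  ext i k
  simp only [Matrix.mul_apply, vecMulVec_apply, Matrix.vecMul, dotProduct, Finset.mul_sum]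
  exact Finset.sum_congr rfl fun l _ => by ring

lemma mul_vmv (u v : Fin N → ℝ) (B : Matrix (Fin N) (Fin N) ℝ) :
    B * vecMulVec u v = vecMulVec (B *ᵥ u) v := by
  ext i k
  simp only [Matrix.mul_apply, vecMulVec_apply, Matrix.mulVec, dotProduct, Finset.sum_mul]
  exact Finset.sum_congr rfl fun l _ => by ring

lemma vmv_transpose (u v : Fin N → ℝ) : (vecMulVec u v)ᵀ = vecMulVec v u := by
  ext i k; simp [vecMulVec_apply, mul_comm]

lemma ite_ite₁ (P : Prop) [Decidable P] (a b c : ℝ) :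
    (if P then (if P then a else b) else c) = if P then a else c := by split_ifs <;> rfl

lemma ite_ite₂ (P : Prop) [Decidable P] (a b c : ℝ) :
    (if P then a else (if P then b else c)) = if P then a else c := by split_ifs <;> rfl

lemma Mdecomp (j : Fin N) :
    Mmat N j = 1 + vecMulVec (fun i => if i = j then (-2:ℝ) else 2) (Pi.single j 1) := by
  ext i k
  rcases eq_or_ne k j with rfl|hk <;> rcases eq_or_ne i k with rfl|hi <;>
    simp_all [Mmat, vecMulVec_apply, Matrix.one_apply, Pi.single_apply, eq_comm] <;> norm_num

lemma Msq (j : Fin N) : Mmat N j * Mmat N j = 1 := by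
  rw [Mdecomp]
  set c : Fin N → ℝ := fun i => if i = j then (-2:ℝ) else 2 with hc
  have hdot : (Pi.single j 1 : Fin N → ℝ) ⬝ᵥ c = -2 := by
    simp [dotProduct, Pi.single_apply, hc, apply_ite (Neg.neg : ℝ → ℝ), ite_ite₁, ite_ite₂,
      Finset.sum_ite_eq']
  rw [add_mul, mul_add, mul_add, one_mul, mul_one, vmv_mul_vmv, hdot]
  ext i k
  simp [vecMulVec_apply]
  ring

lemma key (j : Fin N) :
    Bmat N + vecMulVec (fun i => if i = j then (-2:ℝ) else 2) (fun k => if j = k then (-1:ℝ) else 1)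
      + vecMulVec (fun i => if i = j then (-1:ℝ) else 1) (fun i => if i = j then (-2:ℝ) else 2)
      + (-1 : ℝ) • vecMulVec (fun i => if i = j then (-2:ℝ) else 2)
          (fun i => if i = j then (-2:ℝ) else 2) = Bmat N := by
  ext i k
  simp only [Matrix.add_apply, Matrix.smul_apply, vecMulVec_apply, smul_eq_mul,
    Bmat, Matrix.of_apply]
  split_ifs <;>
    first
      | ring1
      | exact absurd ‹j = k›.symm ‹¬k = j›
      | exact absurd ‹k = j›.symm ‹¬j = k›

lemma MBMt (j : Fin N) : Mmat N j * Bmat N * (Mmat N j)ᵀ = Bmat N := by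
  have hc : ∀ c e : Fin N → ℝ,
      (1 + vecMulVec c e) * Bmat N * (1 + vecMulVec c e)ᵀ =
      Bmat N + vecMulVec c e * Bmat N + Bmat N * vecMulVec e c +
        vecMulVec c e * Bmat N * vecMulVec e c := by
    intro c e
    rw [transpose_add, transpose_one, vmv_transpose]
    noncomm_ring
  set c : Fin N → ℝ := fun i => if i = j then (-2:ℝ) else 2 with hcdef
  set e : Fin N → ℝ := Pi.single j 1 with he
  set r : Fin N → ℝ := fun k => if j = k then (-1:ℝ) else 1 with hr
  set r' : Fin N → ℝ := fun i => if i = j then (-1:ℝ) else 1 with hr'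
  have heB : e ᵥ* Bmat N = r := by
    rw [he, Matrix.single_one_vecMul]; rfl
  have hBe : Bmat N *ᵥ e = r' := by
    funext i
    rw [he, Matrix.mulVec_single_one]
    simp [Bmat, hr']
  have h1 : vecMulVec c e * Bmat N = vecMulVec c r := by rw [vmv_mul, heB]
  have h2 : Bmat N * vecMulVec e c = vecMulVec r' c := by rw [mul_vmv, hBe]
  have hre : r ⬝ᵥ e = -1 := by
    simp [dotProduct, he, hr, Pi.single_apply, mul_ite, ite_ite₁, ite_ite₂, Finset.sum_ite_eq']
  have h3 : vecMulVec c r * vecMulVec e c = (-1 : ℝ) • vecMulVec c c := by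
    rw [vmv_mul_vmv, hre]
  rw [Mdecomp, hc, h1, h2, h3]
  exact key j

end aux

/-- `M_{N,j}² = 1` and `M_{N,j} B_N M_{N,j}ᵗ = B_N`; equivalently `M_{N,j}ᵗ` is an
involutive linear map of `ℝ^N` preserving the bilinear form `b_N`. -/
theorem stmt1 (N : ℕ) (hN : 1 ≤ N) (j : Fin N) :
    Mmat N j * Mmat N j = 1 ∧
    Mmat N j * Bmat N * (Mmat N j)ᵀ = Bmat N ∧
    ((Mmat N j)ᵀ * (Mmat N j)ᵀ = 1 ∧
      ∀ v w : Fin N → ℝ,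
        bform N ((Mmat N j)ᵀ.mulVec v) ((Mmat N j)ᵀ.mulVec w) = bform N v w) := by
  refine ⟨Msq j, MBMt j, ?_, ?_⟩
  · rw [← transpose_mul, Msq j, transpose_one]
  · intro v w
    have h1 : (Mmat N j)ᵀ *ᵥ v = v ᵥ* (Mmat N j) := (Matrix.mulVec_transpose _ _)
    calc bform N ((Mmat N j)ᵀ *ᵥ v) ((Mmat N j)ᵀ *ᵥ w)
        = (v ᵥ* (Mmat N j)) ⬝ᵥ (Bmat N *ᵥ ((Mmat N j)ᵀ *ᵥ w)) := by rw [bform, h1]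
      _ = v ⬝ᵥ ((Mmat N j * Bmat N * (Mmat N j)ᵀ) *ᵥ w) := by
          rw [← Matrix.dotProduct_mulVec, ← Matrix.mulVec_mulVec, ← Matrix.mulVec_mulVec,
            Matrix.dotProduct_mulVec]
      _ = bform N v w := by rw [MBMt j, bform]
end

section
/- Let N ≥ 3 be an integer. Then the cone D_N = {w ∈ ℝ^N : b_N(w, α_i) ≥ 0 for all 1 ≤ i ≤ N} is exactly the set of non-negative linear combinations of the vectors c_1, …, c_N, i.e. D_N = {λ_1 c_1 + ⋯ + λ_N c_N : λ_1, …, λ_N ≥ 0}; moreover b_N(c_j, c_j) = −2(N−2)(N−3) for every 1 ≤ j ≤ N. -/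
open Matrix

lemma mulVec_B (N : ℕ) (w : Fin N → ℝ) (i : Fin N) :
    (Bmat N).mulVec w i = (∑ k, w k) - 2 * w i := by
  have h : ∀ k, (Bmat N) i k * w k = w k - (if k = i then 2 * w k else 0) := by
    intro k
    simp only [Bmat, Matrix.of_apply]
    by_cases h : i = k
    · subst h; simp; ring
    · rw [if_neg h, if_neg (fun hk => h hk.symm)]; ring
  simp [Matrix.mulVec, dotProduct, h, Finset.sum_sub_distrib]

lemma bform_eq (N : ℕ) (v w : Fin N → ℝ) :
    bform N v w = ∑ i, v i * ((∑ k, w k) - 2 * w i) := by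
  simp [bform, dotProduct, mulVec_B]

lemma sum_single (N : ℕ) (i : Fin N) : ∑ k, (Pi.single i 1 : Fin N → ℝ) k = 1 := by
  simp

lemma bform_single (N : ℕ) (w : Fin N → ℝ) (i : Fin N) :
    bform N w (Pi.single i 1) = (∑ k, w k) - 2 * w i := by
  rw [bform_eq, sum_single]
  have h : ∀ m, w m * (1 - 2 * (Pi.single i 1 : Fin N → ℝ) m)
      = w m - (if m = i then 2 * w m else 0) := by
    intro m
    rcases eq_or_ne m i with h | h <;> simp [h, Pi.single_apply] <;> ring
  simp [h, Finset.sum_sub_distrib]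

lemma sum_cvec (N : ℕ) (j : Fin N) : ∑ k, cvec N j k = (N : ℝ) - ((N : ℝ) - 2) := by
  have h : ∀ k, cvec N j k = 1 + (if k = j then -((N:ℝ)-2) else 0) := by
    intro k; rcases eq_or_ne k j with h | h <;> simp [cvec, h] <;> ring
  simp [h, Finset.sum_add_distrib]

lemma sum_lam_cvec (N : ℕ) (lam : Fin N → ℝ) (i : Fin N) :
    (∑ j, lam j • cvec N j) i = (∑ j, lam j) - ((N:ℝ)-2) * lam i := by
  rw [Finset.sum_apply]
  simp only [Pi.smul_apply]
  have h : ∀ jj, lam jj • cvec N jj i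
      = lam jj - (if i = jj then ((N:ℝ)-2) * lam jj else 0) := by
    intro jj
    rcases eq_or_ne i jj with h | h
    · subst h; simp only [cvec, smul_eq_mul, eq_self_iff_true, if_true]; ring
    · simp only [cvec, smul_eq_mul, if_neg h]; ring
  rw [Finset.sum_congr rfl (fun jj _ => h jj), Finset.sum_sub_distrib]
  simp

lemma stmt4_aux (N : ℕ) (hN : 3 ≤ N) :
    {w | ∀ i : Fin N, 0 ≤ bform N w (Pi.single i 1)}
      = {w | ∃ lam : Fin N → ℝ, (∀ j, 0 ≤ lam j) ∧ w = ∑ j, lam j • cvec N j} ∧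
    ∀ j : Fin N, bform N (cvec N j) (cvec N j) = -2 * ((N : ℝ) - 2) * ((N : ℝ) - 3) := by
  have hN2 : (0:ℝ) < (N:ℝ) - 2 := by
    have : (3:ℝ) ≤ (N:ℝ) := by exact_mod_cast hN
    linarith
  have hne : ((N:ℝ) - 2) ≠ 0 := ne_of_gt hN2
  constructor
  · ext w
    simp only [Set.mem_setOf_eq]
    constructor
    · intro hw
      set S := ∑ k, w k with hS
      have hw' : ∀ i, w i ≤ S / 2 := by
        intro i
        have := hw i
        rw [bform_single] at this
        rw [hS]; linarith
      refine ⟨fun j => (S/2 - w j) / ((N:ℝ)-2), fun j => div_nonneg (by have := hw' j; linarith) (le_of_lt hN2), ?_⟩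
      funext i
      rw [sum_lam_cvec]
      have hsl : ∑ jj, (S/2 - w jj) / ((N:ℝ)-2) = S/2 := by
        rw [← Finset.sum_div, Finset.sum_sub_distrib, ← hS, Finset.sum_const,
          Finset.card_univ, Fintype.card_fin, nsmul_eq_mul]
        rw [div_eq_iff hne]; ring
      rw [hsl]
      field_simp
      ring
    · rintro ⟨lam, hlam, rfl⟩
      intro i
      rw [bform_single]
      have h1 : ∀ k, (∑ j, lam j • cvec N j) k = (∑ j, lam j) - ((N:ℝ)-2) * lam k :=
        sum_lam_cvec N lam
      have h2 : ∑ k, (∑ j, lam j • cvec N j) k = 2 * ∑ j, lam j := by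
        simp only [h1]
        rw [Finset.sum_sub_distrib, Finset.sum_const, Finset.card_univ, Fintype.card_fin,
          nsmul_eq_mul, ← Finset.mul_sum]
        have hNN : (3:ℝ) ≤ (N:ℝ) := by exact_mod_cast hN
        ring
      rw [h2, h1]
      have := hlam i
      nlinarith [hlam i]
  · intro j
    rw [bform_eq, sum_cvec]
    have h : ∀ i, cvec N j i * (((N:ℝ) - ((N:ℝ)-2)) - 2 * cvec N j i)
        = if i = j then -((N:ℝ)-3) * (2 + 2*((N:ℝ)-3)) else 0 := by
      intro i
      rcases eq_or_ne i j with h | h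
      · subst h; simp only [cvec, eq_self_iff_true, if_true]; ring
      · simp only [cvec, if_neg h]; ring
    rw [Finset.sum_congr rfl (fun i _ => h i)]
    simp
    ring

/-- For `N ≥ 3`, the cone `D_N` equals the set of non-negative linear combinations of
`c_1, …, c_N`, and `b_N(c_j, c_j) = -2(N-2)(N-3)`. -/
theorem stmt4 (N : ℕ) (hN : 3 ≤ N) :
    Dcone N = {w | ∃ lam : Fin N → ℝ, (∀ j, 0 ≤ lam j) ∧ w = ∑ j, lam j • cvec N j} ∧
    ∀ j : Fin N, bform N (cvec N j) (cvec N j) = -2 * ((N : ℝ) - 2) * ((N : ℝ) - 3) := stmt4_aux N hN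
end

section
/- Let N ≥ 3 be an integer and let i ≠ j be indices in {1,…,N}. If v ∈ ℝ^N satisfies b_N(v, α_i) = 0, b_N(v, α_j) = 0 and b_N(v, v) = 0, then v is a scalar multiple of α_i + α_j. (In particular the codimension-2 faces α_i^⊥ ∩ α_j^⊥ of the cone D_N meet the isotropic cone of b_N exactly along the line ℝ(α_i + α_j).) -/
open Matrix

/-- A `b_N`-isotropic vector orthogonal to two distinct basis vectors `α_i, α_j`
is a scalar multiple of `α_i + α_j`. -/
theorem stmt6 (N : ℕ) (hN : 3 ≤ N) (i j : Fin N) (hij : i ≠ j) (v : Fin N → ℝ)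
    (h1 : bform N v (Pi.single i 1) = 0) (h2 : bform N v (Pi.single j 1) = 0)
    (h3 : bform N v v = 0) :
    ∃ lam : ℝ, v = lam • (Pi.single i 1 + Pi.single j 1) := by
  classical
  set S : ℝ := ∑ k, v k with hS
  have hin : ∀ (w : Fin N → ℝ) (k : Fin N),
      (Bmat N).mulVec w k = (∑ l, w l) - 2 * w k := by
    intro w k
    have h : ∀ l, (if k = l then (-1:ℝ) else 1) * w l
        = w l - (if l = k then 2 * w l else 0) := by
      intro l; by_cases h : l = k
      · subst h; simp; ring
      · simp [h, Ne.symm h]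
    simp only [Bmat, Matrix.mulVec, dotProduct, Matrix.of_apply, h,
      Finset.sum_sub_distrib, Finset.sum_ite_eq' Finset.univ k]
    simp
  have hb : ∀ w : Fin N → ℝ, bform N v w = ∑ k, v k * ((∑ l, w l) - 2 * w k) := by
    intro w
    simp only [bform, dotProduct]
    exact Finset.sum_congr rfl fun k _ => by rw [hin]
  have hsingle : ∀ m : Fin N, bform N v (Pi.single m 1) = S - 2 * v m := by
    intro m
    rw [hb]
    have h1 : (∑ l, (Pi.single m 1 : Fin N → ℝ) l) = 1 := by simp
    rw [h1]
    have : ∀ k, v k * (1 - 2 * (Pi.single m 1 : Fin N → ℝ) k)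
        = v k - (if k = m then 2 * v k else 0) := by
      intro k
      rw [Pi.single_apply]
      by_cases h : k = m <;> simp [h] <;> ring
    simp only [this, Finset.sum_sub_distrib, Finset.sum_ite_eq' Finset.univ m]
    simp [hS]
  have hvi : S - 2 * v i = 0 := by rw [← hsingle i]; exact h1
  have hvj : S - 2 * v j = 0 := by rw [← hsingle j]; exact h2
  have hvv : S * S - 2 * ∑ k, v k * v k = 0 := by
    rw [← h3, hb]
    rw [Finset.sum_congr rfl (fun k _ => by ring :
      ∀ k ∈ Finset.univ, v k * (S - 2 * v k) = S * v k - 2 * (v k * v k))]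
    rw [Finset.sum_sub_distrib, ← Finset.mul_sum, ← Finset.mul_sum, ← hS]
  -- split the sum of squares
  have hmemj : j ∈ Finset.univ.erase i := by simp [Ne.symm hij]
  have hsplit : ∑ k, v k * v k
      = v i * v i + (v j * v j + ∑ k ∈ (Finset.univ.erase i).erase j, v k * v k) := by
    rw [← Finset.add_sum_erase _ _ (Finset.mem_univ i),
        ← Finset.add_sum_erase _ _ hmemj]
  have hrest : ∑ k ∈ (Finset.univ.erase i).erase j, v k * v k = 0 := by
    have hi2 : v i = S / 2 := by linarith
    have hj2 : v j = S / 2 := by linarith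
    rw [hsplit, hi2, hj2] at hvv
    nlinarith [hvv]
  have hzero : ∀ k, k ≠ i → k ≠ j → v k = 0 := by
    intro k hki hkj
    have hk : k ∈ (Finset.univ.erase i).erase j := by simp [hki, hkj]
    have := (Finset.sum_eq_zero_iff_of_nonneg
      (fun l _ => mul_self_nonneg (v l))).mp hrest k hk
    nlinarith [this]
  refine ⟨v i, funext fun k => ?_⟩
  by_cases hki : k = i
  · subst hki
    simp [Pi.single_apply, hij, Ne.symm hij]
  · by_cases hkj : k = j
    · subst hkj
      have : v k = v i := by linarith
      simp [Pi.single_apply, hij, Ne.symm hij, this]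
    · simp [Pi.single_apply, hki, hkj, hzero k hki hkj]
end

section
/- Let N ≥ 3 be an integer and let a = (a_1,…,a_N) ∈ ℤ^N satisfy b_N(a,a) = 0 and a_i ≥ 1 for all i. Set σ = a_1 + ⋯ + a_N. Then there exists an index i with 2a_i > σ; and for any such i, the vector a' = M_{N,i}ᵗ a satisfies a'_i = 2σ − 3a_i, a'_k = a_k for k ≠ i, and its coordinate sum equals 3σ − 4a_i ≤ σ − 2. -/
open Matrix

/-- Descent step: for an integral isotropic vector `a` with all coordinates `≥ 1`,
some index satisfies `2aᵢ > σ`, and applying `M_{N,i}ᵗ` replaces `aᵢ` by `2σ - 3aᵢ`,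
keeps the other coordinates, and drops the coordinate sum to `3σ - 4aᵢ ≤ σ - 2`. -/
theorem stmt9 (N : ℕ) (hN : 3 ≤ N) (a : Fin N → ℤ)
    (hiso : bformZ N a a = 0) (hpos : ∀ i, 1 ≤ a i) :
    (∃ i : Fin N, (∑ k, a k) < 2 * a i) ∧
    ∀ i : Fin N, (∑ k, a k) < 2 * a i →
      ((MmatZ N i)ᵀ.mulVec a) i = 2 * (∑ k, a k) - 3 * a i ∧
      (∀ k : Fin N, k ≠ i → ((MmatZ N i)ᵀ.mulVec a) k = a k) ∧
      (∑ k, ((MmatZ N i)ᵀ.mulVec a) k) = 3 * (∑ k, a k) - 4 * a i ∧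
      3 * (∑ k, a k) - 4 * a i ≤ (∑ k, a k) - 2 := by
  classical
  haveI : NeZero N := ⟨by omega⟩
  set σ := ∑ k, a k with hσ
  have hBv : ∀ i, (BmatZ N).mulVec a i = σ - 2 * a i := by
    intro i
    simp only [BmatZ, Matrix.mulVec, dotProduct, Matrix.of_apply]
    rw [Finset.sum_congr rfl (fun k _ => show (if i = k then (-1:ℤ) else 1) * a k
        = a k - (if k = i then 2 * a k else 0) by
      rcases eq_or_ne i k with h|h <;> simp [h, eq_comm] <;> ring)]
    rw [Finset.sum_sub_distrib, Finset.sum_ite_eq' Finset.univ i (fun k => 2 * a k)]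
    simp [hσ]
  have hiso' : ∑ i, a i * (σ - 2 * a i) = 0 := by
    rw [← hiso]
    unfold bformZ
    simp only [dotProduct]
    exact (Finset.sum_congr rfl fun i _ => by rw [hBv i]).symm
  have hσpos : 0 < σ := Finset.sum_pos (fun i _ => by linarith [hpos i]) Finset.univ_nonempty
  have hex : ∃ i : Fin N, σ < 2 * a i := by
    by_contra h
    push_neg at h
    have hall : ∀ i ∈ Finset.univ, a i * (σ - 2 * a i) = 0 :=
      (Finset.sum_eq_zero_iff_of_nonneg (fun i _ =>
        mul_nonneg (by linarith [hpos i]) (by linarith [h i]))).mp hiso'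
    have h2 : ∀ i : Fin N, σ = 2 * a i := by
      intro i
      have h0 := hall i (Finset.mem_univ i)
      have hai := hpos i
      rcases mul_eq_zero.mp h0 with h'|h' <;> omega
    have hsum : (N : ℤ) * σ = 2 * σ := by
      calc (N:ℤ) * σ = ∑ _i : Fin N, σ := by
            rw [Finset.sum_const, Finset.card_univ, Fintype.card_fin]; ring
        _ = ∑ i, 2 * a i := Finset.sum_congr rfl fun i _ => h2 i
        _ = 2 * σ := by rw [← Finset.mul_sum]
    have hN3 : (3:ℤ) ≤ (N:ℤ) := by exact_mod_cast hN
    nlinarith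
  refine ⟨hex, fun i hi => ?_⟩
  have hMi : ((MmatZ N i)ᵀ.mulVec a) i = 2 * σ - 3 * a i := by
    simp only [MmatZ, Matrix.mulVec, dotProduct, Matrix.transpose_apply, Matrix.of_apply,
      eq_self_iff_true, if_true]
    rw [Finset.sum_congr rfl (fun j _ => show
        (if j = i then (-1:ℤ) else 2) * a j
          = 2 * a j - (if j = i then 3 * a j else 0) by
      rcases eq_or_ne j i with h|h <;> simp [h] <;> ring)]
    rw [Finset.sum_sub_distrib, ← Finset.mul_sum,
      Finset.sum_ite_eq' Finset.univ i (fun j => 3 * a j)]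
    simp only [Finset.mem_univ, if_true, ← hσ]
  have hMk : ∀ k : Fin N, k ≠ i → ((MmatZ N i)ᵀ.mulVec a) k = a k := by
    intro k hk
    simp only [MmatZ, Matrix.mulVec, dotProduct, Matrix.transpose_apply, Matrix.of_apply]
    rw [Finset.sum_congr rfl (fun j _ => show
        (if k = i then (if j = i then (-1:ℤ) else 2) else if j = k then 1 else 0) * a j
          = if j = k then a j else 0 by
      rcases eq_or_ne j k with h|h <;> simp [h, hk])]
    simp
  have hsum' : (∑ k, ((MmatZ N i)ᵀ.mulVec a) k) = 3 * σ - 4 * a i := by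
    rw [Finset.sum_congr rfl (fun k _ => show ((MmatZ N i)ᵀ.mulVec a) k
        = a k + (if k = i then 2 * σ - 4 * a i else 0) by
      rcases eq_or_ne k i with h|h
      · subst h; rw [hMi]; simp; ring
      · rw [hMk k h]; simp [h])]
    rw [Finset.sum_add_distrib, Finset.sum_ite_eq' Finset.univ i (fun _ => 2 * σ - 4 * a i)]
    simp only [Finset.mem_univ, if_true, ← hσ]
    ring
  exact ⟨hMi, hMk, hsum', by omega⟩
end

section
/- Let A = M_{3,1}·M_{3,2}·M_{3,3} be the product of the three 3×3 integer matrices M_{3,1}, M_{3,2}, M_{3,3}. Then 9 + 4√5 is a real eigenvalue of A, and every complex eigenvalue λ of A satisfies |λ| ≤ 9 + 4√5; in particular the spectral radius of A equals 9 + 4√5 > 1. -/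
open Matrix

/-- `9 + 4√5` is a real eigenvalue of `A = M_{3,1}·M_{3,2}·M_{3,3}`, and every complex
eigenvalue `λ` of `A` satisfies `|λ| ≤ 9 + 4√5`; in particular the spectral radius of
`A` is `9 + 4√5 > 1`. -/
theorem stmt14
    (A : Matrix (Fin 3) (Fin 3) ℝ)
    (hA : A = !![(-1 : ℝ), 0, 0; 2, 1, 0; 2, 0, 1] *
              !![(1 : ℝ), 2, 0; 0, -1, 0; 0, 2, 1] *
              !![(1 : ℝ), 0, 2; 0, 1, 2; 0, 0, -1]) :
    (∃ x : Fin 3 → ℝ, x ≠ 0 ∧ A.mulVec x = (9 + 4 * Real.sqrt 5) • x) ∧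
    (∀ lam : ℂ, ∀ y : Fin 3 → ℂ, y ≠ 0 →
      (A.map (fun r : ℝ => (r : ℂ))).mulVec y = lam • y →
        ‖lam‖ ≤ 9 + 4 * Real.sqrt 5) ∧
    1 < 9 + 4 * Real.sqrt 5 := by
  have hA' : A = !![(-1 : ℝ), -2, -6; 2, 3, 10; 2, 6, 15] := by
    rw [hA]
    norm_num [Matrix.mul_fin_three]
  subst hA'
  have hs : Real.sqrt 5 * Real.sqrt 5 = 5 := Real.mul_self_sqrt (by norm_num)
  have hsnn : (0:ℝ) ≤ Real.sqrt 5 := Real.sqrt_nonneg 5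
  have hsle : 4 * Real.sqrt 5 ≤ 9 := by nlinarith
  refine ⟨⟨![4 * Real.sqrt 5 - 12, 4 * Real.sqrt 5 - 4, 8], ?_, ?_⟩, ?_, by nlinarith⟩
  · intro h
    have := congrFun h 2
    simp at this
  · funext i
    fin_cases i <;>
      simp [Matrix.mulVec, dotProduct, Fin.sum_univ_three, Matrix.vecHead,
        Matrix.vecTail] <;> nlinarith
  · intro lam y hy hly
    set A' := (!![(-1 : ℝ), -2, -6; 2, 3, 10; 2, 6, 15]).map (fun r : ℝ => (r : ℂ)) with hA'
    have hA'' : A' = !![(-1 : ℂ), -2, -6; 2, 3, 10; 2, 6, 15] := by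
      ext i j
      fin_cases i <;> fin_cases j <;>
        simp [hA', Matrix.map_apply, Matrix.vecHead, Matrix.vecTail]
    have hM : (lam • (1 : Matrix (Fin 3) (Fin 3) ℂ) - A').mulVec y = 0 := by
      rw [Matrix.sub_mulVec, Matrix.smul_mulVec, Matrix.one_mulVec, hly]
      simp
    have hdet : (lam • (1 : Matrix (Fin 3) (Fin 3) ℂ) - A').det = 0 :=
      (Matrix.exists_mulVec_eq_zero_iff).mp ⟨y, hy, hM⟩
    rw [hA''] at hdet
    have hpoly : lam ^ 3 - 17 * lam ^ 2 - 17 * lam + 1 = 0 := by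
      have : (lam • (1 : Matrix (Fin 3) (Fin 3) ℂ) -
          !![(-1 : ℂ), -2, -6; 2, 3, 10; 2, 6, 15]).det
          = lam ^ 3 - 17 * lam ^ 2 - 17 * lam + 1 := by
        simp [Matrix.det_fin_three, Matrix.smul_apply, Matrix.one_apply, Matrix.vecHead,
          Matrix.vecTail]
        ring
      rw [this] at hdet
      exact hdet
    set t : ℂ := (Real.sqrt 5 : ℂ) with ht
    have ht2 : t * t = 5 := by
      rw [ht, ← Complex.ofReal_mul, hs]; norm_num
    have hfac : (lam + 1) * ((lam - (9 + 4 * t)) * (lam - (9 - 4 * t))) = 0 := by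
      linear_combination hpoly + (-16 * lam - 16) * ht2
    rcases mul_eq_zero.mp hfac with h1 | h23
    · have hl : lam = -1 := by linear_combination h1
      rw [hl]
      simp
      nlinarith
    · rcases mul_eq_zero.mp h23 with h2 | h3
      · have hl : lam = ((9 + 4 * Real.sqrt 5 : ℝ) : ℂ) := by
          rw [sub_eq_zero] at h2; rw [h2, ht]; push_cast; ring
        rw [hl, Complex.norm_real, Real.norm_eq_abs, abs_of_nonneg (by positivity)]
      · have hl : lam = ((9 - 4 * Real.sqrt 5 : ℝ) : ℂ) := by
          rw [sub_eq_zero] at h3; rw [h3, ht]; push_cast; ring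
        rw [hl, Complex.norm_real, Real.norm_eq_abs, abs_of_nonneg (by linarith)]
        linarith
end

section
/- Let A be the 3×3 integer matrix whose diagonal entries are 0 and whose off-diagonal entries are all 2, i.e. A = [[0,2,2],[2,0,2],[2,2,0]]. Then there is no vector x ∈ ℤ³ with xᵗ A x = −2. (The intersection form of a generic Wehler surface does not represent the value −2, hence such a surface contains no smooth rational curve of self-intersection −2.) -/
open Matrix

/-- The intersection form of a generic Wehler surface, with Gram matrix
`[[0,2,2],[2,0,2],[2,2,0]]`, does not represent `-2` over `ℤ`. -/
theorem stmt16 :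
    ¬ ∃ x : Fin 3 → ℤ,
      x ⬝ᵥ (!![(0 : ℤ), 2, 2; 2, 0, 2; 2, 2, 0] : Matrix (Fin 3) (Fin 3) ℤ).mulVec x
        = -2 := by
  rintro ⟨x, hx⟩
  simp [dotProduct, mulVec, Fin.sum_univ_three, Matrix.vecHead, Matrix.vecTail] at hx
  have h4 : (4 : ℤ) ∣ -2 :=
    ⟨x 0 * x 1 + x 0 * x 2 + x 1 * x 2, by linear_combination -hx⟩
  norm_num at h4
end
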